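/- Let N > 100 and let (x_1, …, x_N) be the unique strictly decreasing zero-mean solution of the MIW recursion. Then for every n with 1 ≤ n ≤ m − 1, x_n ≤ √(2(1 + log(m/n))). -/

import Mathlib

noncomputable section

/-- Partial sums `S_n = x_1 + ⋯ + x_n`. -/
def Ssum (x : ℕ → ℝ) (n : ℕ) : ℝ := ∑ i ∈ Finset.Icc 1 n, x i

/-- `x` is a solution of the MIW recursion
`x_{n+1} = x_n - 1/(x_1 + ⋯ + x_n)` for `1 ≤ n ≤ N - 1`. -/
def IsMIW (N : ℕ) (x : ℕ → ℝ) : Prop :=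
  ∀ n, 1 ≤ n → n ≤ N - 1 → Ssum x n ≠ 0 ∧ x (n + 1) = x n - 1 / Ssum x n

/-- `m = (N+1)/2` if `N` is odd and `m = N/2` if `N` is even; in natural number
division both equal `(N+1)/2`. -/
def mIdx (N : ℕ) : ℕ := (N + 1) / 2

/-- The comparison sequence `A_k = x_n² - 2 ∑_{j=n}^{k-1} 1/j`. -/
def Aseq (x : ℕ → ℝ) (n k : ℕ) : ℝ := x n ^ 2 - 2 * ∑ j ∈ Finset.Ico n k, (1:ℝ)/(j:ℝ)

lemma Aseq_succ (x : ℕ → ℝ) {n k : ℕ} (hk : n ≤ k) :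
    Aseq x n (k+1) = Aseq x n k - 2*(1/(k:ℝ)) := by
  unfold Aseq
  rw [Finset.sum_Ico_succ_top hk]
  ring

lemma Aseq_base (x : ℕ → ℝ) (n : ℕ) : Aseq x n n = x n ^ 2 := by
  simp [Aseq]

lemma miw_mono {N : ℕ} {x : ℕ → ℝ} (hdec : ∀ n, 1 ≤ n → n < N → x (n + 1) < x n)
    {i j : ℕ} (hi : 1 ≤ i) (hij : i ≤ j) (hj : j ≤ N) : x j ≤ x i := by
  induction j with
  | zero => omega
  | succ k ih =>
    rcases Nat.eq_or_lt_of_le hij with h | h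
    · rw [h]
    · have h1 : x k ≤ x i := ih (by omega) (by omega)
      have h2 : x (k+1) < x k := hdec k (by omega) (by omega)
      linarith

lemma Ssum_succ (x : ℕ → ℝ) (k : ℕ) :
    Ssum x (k+1) = Ssum x k + x (k+1) := by
  unfold Ssum
  rw [Finset.sum_Icc_succ_top (by omega)]

lemma Ssum_ge {N : ℕ} {x : ℕ → ℝ} (hdec : ∀ n, 1 ≤ n → n < N → x (n + 1) < x n)
    {k : ℕ} (hk : 1 ≤ k) (hkN : k ≤ N) : (k : ℝ) * x k ≤ Ssum x k := by
  have h : ∀ i ∈ Finset.Icc 1 k, x k ≤ x i := by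
    intro i hi
    simp only [Finset.mem_Icc] at hi
    exact miw_mono hdec hi.1 hi.2 hkN
  calc (k:ℝ) * x k = ∑ _i ∈ Finset.Icc 1 k, x k := by
        rw [Finset.sum_const, Nat.card_Icc]; simp [mul_comm]
    _ ≤ Ssum x k := Finset.sum_le_sum h

lemma miw_S_pos {N : ℕ} {x : ℕ → ℝ} (hdec : ∀ n, 1 ≤ n → n < N → x (n + 1) < x n)
    (hmean : ∑ i ∈ Finset.Icc 1 N, x i = 0)
    {k : ℕ} (hk : 1 ≤ k) (hkN : k < N) : 0 < Ssum x k := by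
  have h1 : (k : ℝ) * x k ≤ Ssum x k := Ssum_ge hdec hk (le_of_lt hkN)
  have hsplit : Ssum x k + ∑ i ∈ Finset.Icc (k+1) N, x i = 0 := by
    unfold Ssum
    rw [← hmean, ← Finset.sum_union]
    · congr 1
      ext a
      simp only [Finset.mem_union, Finset.mem_Icc]
      omega
    · rw [Finset.disjoint_left]
      intro a ha hb
      simp only [Finset.mem_Icc] at ha hb
      omega
  have h2 : ∑ i ∈ Finset.Icc (k+1) N, x i ≤ ((N : ℝ) - k) * x (k+1) := by
    have h : ∀ i ∈ Finset.Icc (k+1) N, x i ≤ x (k+1) := by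
      intro i hi
      simp only [Finset.mem_Icc] at hi
      exact miw_mono hdec (by omega) hi.1 hi.2
    calc ∑ i ∈ Finset.Icc (k+1) N, x i ≤ ∑ _i ∈ Finset.Icc (k+1) N, x (k+1) :=
          Finset.sum_le_sum h
      _ = ((N : ℝ) - k) * x (k+1) := by
          rw [Finset.sum_const, Nat.card_Icc]
          have h5 : N + 1 - (k+1) = N - k := by omega
          rw [h5, nsmul_eq_mul, Nat.cast_sub (le_of_lt hkN)]
  have h3 : x (k+1) < x k := hdec k hk hkN
  have hNk : (0:ℝ) < (N:ℝ) - k := by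
    have : (k:ℝ) < N := by exact_mod_cast hkN
    linarith
  have hkpos : (0:ℝ) < k := by exact_mod_cast hk
  nlinarith [mul_lt_mul_of_pos_left h3 hNk]

lemma miw_sq_sum {N : ℕ} (hN : 2 ≤ N) {x : ℕ → ℝ} (hMIW : IsMIW N x)
    (hmean : ∑ i ∈ Finset.Icc 1 N, x i = 0) :
    ∑ i ∈ Finset.Icc 1 N, (x i)^2 = (N : ℝ) - 1 := by
  have key : ∀ K, 1 ≤ K → K ≤ N →
      ∑ i ∈ Finset.Icc 1 K, (x i)^2 = Ssum x K * x K + ((K : ℝ) - 1) := by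
    intro K hK1
    induction K with
    | zero => omega
    | succ k ih =>
      intro hKN
      rcases Nat.eq_or_lt_of_le hK1 with h | h
      · rw [← h]
        simp [Ssum, sq]
      · have hk1 : 1 ≤ k := by omega
        have ihk := ih hk1 (by omega)
        have hrec := hMIW k hk1 (by omega)
        have hS : Ssum x k ≠ 0 := hrec.1
        have hx : x (k+1) = x k - 1 / Ssum x k := hrec.2
        rw [Finset.sum_Icc_succ_top (by omega : 1 ≤ k + 1), ihk, Ssum_succ]
        push_cast
        rw [hx]
        field_simp
        ring
  have hfin := key N (by omega) le_rfl
  have hz : Ssum x N = 0 := hmean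
  rw [hfin, hz, zero_mul, zero_add]

lemma harmonic_le {n : ℕ} (hn : 1 ≤ n) : ∀ k, n ≤ k →
    ∑ j ∈ Finset.Ico n k, (1:ℝ)/(j:ℝ) ≤ 1/(n:ℝ) - 1/(k:ℝ) + (Real.log k - Real.log n) := by
  intro k hk
  induction k, hk using Nat.le_induction with
  | base => simp
  | succ k hk ih =>
    rw [Finset.sum_Ico_succ_top hk]
    have hk0 : (0:ℝ) < (k:ℝ) := by
      have : 1 ≤ k := le_trans hn hk
      exact_mod_cast this
    have hk1 : (0:ℝ) < (k:ℝ) + 1 := by linarith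
    have h := Real.log_le_sub_one_of_pos (div_pos hk0 hk1)
    rw [Real.log_div hk0.ne' hk1.ne'] at h
    have heq : (k:ℝ)/((k:ℝ)+1) - 1 = -(1/((k:ℝ)+1)) := by field_simp; ring
    push_cast
    linarith [ih]

lemma Fsum (x : ℕ → ℝ) {n : ℕ} (hn : 1 ≤ n) : ∀ M, n ≤ M →
    ((n:ℝ) - 1) * x n ^ 2 + ∑ k ∈ Finset.Icc n M, Aseq x n k
      = (M:ℝ) * Aseq x n M + 2 * ((M:ℝ) - (n:ℝ)) := by
  intro M hM
  induction M, hM using Nat.le_induction with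
  | base =>
    rw [Finset.Icc_self, Finset.sum_singleton, Aseq_base]
    ring
  | succ M hM ih =>
    rw [Finset.sum_Icc_succ_top (by omega : n ≤ M + 1), ← add_assoc, ih,
      Aseq_succ x hM]
    have hM0R : (0:ℝ) < (M:ℝ) := by
      have : 1 ≤ M := le_trans hn hM
      exact_mod_cast this
    have h2 : (M:ℝ) * (2*(1/(M:ℝ))) = 2 := by field_simp
    push_cast
    nlinarith [h2]

lemma miw_invariant {N n m : ℕ} {x : ℕ → ℝ} (hMIW : IsMIW N x)
    (hdec : ∀ n, 1 ≤ n → n < N → x (n + 1) < x n)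
    (hmean : ∑ i ∈ Finset.Icc 1 N, x i = 0)
    (hn1 : 1 ≤ n) (hmN : m + 1 ≤ N) (hxn : 0 < x n)
    (hA2k : ∀ k, n ≤ k → k ≤ m → 2*(1/(k:ℝ)) ≤ Aseq x n k) :
    ∀ k, n ≤ k → k ≤ m → 0 < x k ∧ Aseq x n k ≤ x k ^ 2 := by
  intro k hk
  induction k, hk using Nat.le_induction with
  | base =>
    intro _
    exact ⟨hxn, le_of_eq (Aseq_base x n)⟩
  | succ k hk ih =>
    intro hk1m
    obtain ⟨hxk, hAxk⟩ := ih (by omega)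
    have hk1 : 1 ≤ k := le_trans hn1 hk
    have hk0R : (0:ℝ) < (k:ℝ) := by exact_mod_cast hk1
    have hrec := hMIW k hk1 (by omega)
    have hSpos : 0 < Ssum x k := miw_S_pos hdec hmean hk1 (by omega)
    have hSge : (k:ℝ) * x k ≤ Ssum x k := Ssum_ge hdec hk1 (by omega)
    have hkx_pos : (0:ℝ) < (k:ℝ) * x k := mul_pos hk0R hxk
    have hrecip : 1/(Ssum x k) ≤ 1/((k:ℝ) * x k) :=
      one_div_le_one_div_of_le hkx_pos hSge
    have hx1 : x k - 1/((k:ℝ) * x k) ≤ x (k+1) := by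
      rw [hrec.2]; linarith
    have hA2 : 2*(1/(k:ℝ)) ≤ Aseq x n k := hA2k k hk (by omega)
    have hkA : 2 ≤ (k:ℝ) * Aseq x n k := by
      have h0 : (k:ℝ) * (2*(1/(k:ℝ))) = 2 := by field_simp
      nlinarith [mul_le_mul_of_nonneg_left hA2 (le_of_lt hk0R)]
    have hkx2 : 2 ≤ (k:ℝ) * x k ^ 2 := by
      nlinarith [mul_le_mul_of_nonneg_left hAxk (le_of_lt hk0R)]
    have ht_pos : 0 < x k - 1/((k:ℝ) * x k) := by
      rw [sub_pos, div_lt_iff₀ hkx_pos]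
      nlinarith
    have hxk1_pos : 0 < x (k+1) := lt_of_lt_of_le ht_pos hx1
    refine ⟨hxk1_pos, ?_⟩
    have hsq : (x k - 1/((k:ℝ) * x k))^2 ≤ x (k+1) ^ 2 := by
      nlinarith [hx1, ht_pos]
    have hexp : x k * (1/((k:ℝ) * x k)) = 1/(k:ℝ) := by
      field_simp
    rw [Aseq_succ x hk]
    nlinarith [sq_nonneg (1/((k:ℝ) * x k)), hsq, hexp, hAxk]

/-- For the unique strictly decreasing zero-mean solution of the MIW recursion with
`N > 100`, for `1 ≤ n ≤ m - 1` one has `x_n ≤ √(2(1 + log(m/n)))`. -/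
theorem xn_upper_bound (N : ℕ) (hN : 100 < N) (x : ℕ → ℝ)
    (hMIW : IsMIW N x) (hdec : ∀ n, 1 ≤ n → n < N → x (n + 1) < x n)
    (hmean : ∑ i ∈ Finset.Icc 1 N, x i = 0) :
    ∀ n, 1 ≤ n → n ≤ mIdx N - 1 →
      x n ≤ Real.sqrt (2 * (1 + Real.log ((mIdx N : ℝ) / (n : ℝ)))) := by
  intro n hn1 hn2
  set m : ℕ := mIdx N with hm
  have hmval : m = (N+1)/2 := rfl
  have hN2m : N ≤ 2*m := by omega
  have h2mN : 2*m ≤ N + 1 := by omega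
  have hnm : n + 1 ≤ m := by omega
  have hmN : m + 1 ≤ N := by omega
  by_contra hcon
  push_neg at hcon
  have hn0R : (0:ℝ) < (n:ℝ) := by exact_mod_cast hn1
  have hn1R : (1:ℝ) ≤ (n:ℝ) := by exact_mod_cast hn1
  have hm0R : (0:ℝ) < (m:ℝ) := by
    have : 0 < m := by omega
    exact_mod_cast this
  have hnmR : (n:ℝ) ≤ (m:ℝ) := by
    have : n ≤ m := by omega
    exact_mod_cast this
  have hmn1 : (1:ℝ) ≤ (m:ℝ)/(n:ℝ) := (one_le_div hn0R).mpr hnmR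
  have hlog0 : 0 ≤ Real.log ((m:ℝ)/(n:ℝ)) := Real.log_nonneg hmn1
  have hxn_pos : 0 < x n :=
    lt_of_le_of_lt (Real.sqrt_nonneg (2 * (1 + Real.log ((m:ℝ)/(n:ℝ))))) hcon
  have hxn2 : 2 * (1 + (Real.log (m:ℝ) - Real.log (n:ℝ))) < x n ^ 2 := by
    have h1 : Real.sqrt (2 * (1 + Real.log ((m:ℝ)/(n:ℝ)))) ^ 2
        = 2 * (1 + Real.log ((m:ℝ)/(n:ℝ))) := Real.sq_sqrt (by linarith)
    have h2 : 2 * (1 + Real.log ((m:ℝ)/(n:ℝ))) < x n ^ 2 := by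
      nlinarith [Real.sqrt_nonneg (2 * (1 + Real.log ((m:ℝ)/(n:ℝ)))), hcon]
    rwa [Real.log_div hm0R.ne' hn0R.ne'] at h2
  -- lower bound for A k
  have hAgt : ∀ k, n ≤ k → k ≤ m →
      2 - 2*(1/(n:ℝ)) + 2*(1/(k:ℝ)) + 2*(Real.log (m:ℝ) - Real.log (k:ℝ))
        < Aseq x n k := by
    intro k hk hkm
    have hHle := harmonic_le hn1 k hk
    unfold Aseq
    linarith
  have hA2k : ∀ k, n ≤ k → k ≤ m → 2*(1/(k:ℝ)) ≤ Aseq x n k := by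
    intro k hk hkm
    have hk0R : (0:ℝ) < (k:ℝ) := by
      have : 1 ≤ k := le_trans hn1 hk
      exact_mod_cast this
    have hkmR : (k:ℝ) ≤ (m:ℝ) := by exact_mod_cast hkm
    have hlogk : Real.log (k:ℝ) ≤ Real.log (m:ℝ) := Real.log_le_log hk0R hkmR
    have hinv1 : 1/(n:ℝ) ≤ 1 := by
      rw [div_le_one hn0R]; exact hn1R
    have := hAgt k hk hkm
    linarith
  have hinv := miw_invariant hMIW hdec hmean hn1 hmN hxn_pos hA2k
  -- assemble the contradiction
  have hsq_sum := miw_sq_sum (by omega) hMIW hmean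
  have hsub : Finset.Icc 1 m ⊆ Finset.Icc 1 N := Finset.Icc_subset_Icc le_rfl (by omega)
  have h1m : ∑ i ∈ Finset.Icc 1 m, (x i)^2 ≤ (N:ℝ) - 1 := by
    rw [← hsq_sum]
    exact Finset.sum_le_sum_of_subset_of_nonneg hsub (fun i _ _ => sq_nonneg _)
  have hsplit : ∑ i ∈ Finset.Icc 1 m, (x i)^2
      = ∑ i ∈ Finset.Icc 1 (n-1), (x i)^2 + ∑ i ∈ Finset.Icc n m, (x i)^2 := by
    rw [← Finset.sum_union]
    · congr 1
      ext a
      simp only [Finset.mem_union, Finset.mem_Icc]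
      omega
    · rw [Finset.disjoint_left]
      intro a ha hb
      simp only [Finset.mem_Icc] at ha hb
      omega
  have hhead : ((n:ℝ) - 1) * x n ^ 2 ≤ ∑ i ∈ Finset.Icc 1 (n-1), (x i)^2 := by
    have h : ∀ i ∈ Finset.Icc 1 (n-1), x n ^ 2 ≤ (x i)^2 := by
      intro i hi
      simp only [Finset.mem_Icc] at hi
      have hxi : x n ≤ x i := miw_mono hdec hi.1 (by omega) (by omega)
      nlinarith
    calc ((n:ℝ) - 1) * x n ^ 2 = ∑ _i ∈ Finset.Icc 1 (n-1), x n ^ 2 := by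
          rw [Finset.sum_const, Nat.card_Icc, nsmul_eq_mul]
          have h5 : n - 1 + 1 - 1 = n - 1 := by omega
          rw [h5, Nat.cast_sub hn1]
          push_cast
          ring
      _ ≤ ∑ i ∈ Finset.Icc 1 (n-1), (x i)^2 := Finset.sum_le_sum h
  have hmid : ∑ k ∈ Finset.Icc n m, Aseq x n k ≤ ∑ i ∈ Finset.Icc n m, (x i)^2 := by
    apply Finset.sum_le_sum
    intro i hi
    simp only [Finset.mem_Icc] at hi
    exact (hinv i hi.1 hi.2).2
  have hFm := Fsum x hn1 m (by omega)
  have hAm : 2 - 2*(1/(n:ℝ)) + 2*(1/(m:ℝ)) < Aseq x n m := by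
    have := hAgt m (by omega) le_rfl
    linarith
  -- arithmetic finish
  have hNm : (N:ℝ) ≤ 2*(m:ℝ) := by exact_mod_cast hN2m
  have hdiv1 : (m:ℝ)*(1/(n:ℝ)) ≤ (m:ℝ) + 1 - (n:ℝ) := by
    rw [mul_one_div, div_le_iff₀ hn0R]
    nlinarith [mul_nonneg (sub_nonneg.2 hn1R) (sub_nonneg.2 hnmR)]
  have hmAm : (m:ℝ) * (2 - 2*(1/(n:ℝ)) + 2*(1/(m:ℝ))) < (m:ℝ) * Aseq x n m :=
    mul_lt_mul_of_pos_left hAm hm0R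
  have hmexp : (m:ℝ) * (2 - 2*(1/(n:ℝ)) + 2*(1/(m:ℝ)))
      = 2*(m:ℝ) - 2*((m:ℝ)*(1/(n:ℝ))) + 2 := by
    field_simp
  have hfinal : (N:ℝ) - 1 < (N:ℝ) - 1 := by
    calc (N:ℝ) - 1 < (N:ℝ) := by linarith
      _ ≤ 2*(m:ℝ) := hNm
      _ ≤ (m:ℝ) * Aseq x n m + 2*((m:ℝ) - (n:ℝ)) := by
          rw [hmexp] at hmAm
          linarith [hmAm, hdiv1]
      _ = ((n:ℝ) - 1) * x n ^ 2 + ∑ k ∈ Finset.Icc n m, Aseq x n k := hFm.symm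
      _ ≤ ∑ i ∈ Finset.Icc 1 (n-1), (x i)^2 + ∑ i ∈ Finset.Icc n m, (x i)^2 := by
          linarith [hhead, hmid]
      _ = ∑ i ∈ Finset.Icc 1 m, (x i)^2 := hsplit.symm
      _ ≤ (N:ℝ) - 1 := h1m
  exact absurd hfinal (lt_irrefl _)
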